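/- Let G be a finite UCS p-group of odd exponent p² and H a subgroup with Φ(G) ≤ H ≤ G. Then H is powerful (i.e. H' ≤ H^p) if and only if the image H/Φ(G) is a subalgebra of the anti-commutative algebra L(G) on G/Φ(G). This gives a bijection between subalgebras of L(G) and powerful subgroups of G containing Φ(G). -/

import Mathlib

open scoped commutatorElement

/-- Power identity in a group where the commutator `⁅y,x⁆` is central. -/
theorem stmt12_aux_pow {G : Type*} [Group G] (x y : G)
    (hc : ∀ z : G, Commute ⁅y, x⁆ z) (n : ℕ) :
    (x * y) ^ n = x ^ n * y ^ n * ⁅y, x⁆ ^ n.choose 2 := by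
  induction n with
  | zero => simp
  | succ n ih =>
    have hyx : ∀ k : ℕ, y ^ k * x = x * y ^ k * ⁅y, x⁆ ^ k := by
      intro k
      induction k with
      | zero => simp
      | succ k ihk =>
        have h1 : y * x = x * y * ⁅y, x⁆ := by
          have h0 : y * x = ⁅y, x⁆ * (x * y) := by
            rw [commutatorElement_def]; group
          rw [h0, (hc (x * y)).eq, mul_assoc]
        calc y ^ (k+1) * x = y ^ k * (y * x) := by rw [pow_succ, mul_assoc]
          _ = y ^ k * (x * y * ⁅y, x⁆) := by rw [h1]
          _ = (y ^ k * x) * y * ⁅y, x⁆ := by group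
          _ = x * y ^ k * ⁅y, x⁆ ^ k * y * ⁅y, x⁆ := by rw [ihk]
          _ = x * y ^ (k+1) * ⁅y, x⁆ ^ (k+1) := by
              rw [pow_succ y, pow_succ ⁅y, x⁆]
              have := (hc y).pow_left k
              calc x * y ^ k * ⁅y, x⁆ ^ k * y * ⁅y, x⁆
                  = x * y ^ k * (⁅y, x⁆ ^ k * y) * ⁅y, x⁆ := by group
                _ = x * y ^ k * (y * ⁅y, x⁆ ^ k) * ⁅y, x⁆ := by rw [this.eq]
                _ = x * (y ^ k * y) * (⁅y, x⁆ ^ k * ⁅y, x⁆) := by group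
    calc (x * y) ^ (n+1) = (x * y) ^ n * (x * y) := pow_succ _ _
      _ = x ^ n * y ^ n * ⁅y, x⁆ ^ n.choose 2 * (x * y) := by rw [ih]
      _ = x ^ n * (y ^ n * x) * y * ⁅y, x⁆ ^ n.choose 2 := by
          have h1 := ((hc x).pow_left (n.choose 2)).eq
          have h2 := ((hc y).pow_left (n.choose 2)).eq
          calc x ^ n * y ^ n * ⁅y, x⁆ ^ n.choose 2 * (x * y)
              = x ^ n * y ^ n * (⁅y, x⁆ ^ n.choose 2 * x) * y := by group
            _ = x ^ n * y ^ n * (x * ⁅y, x⁆ ^ n.choose 2) * y := by rw [h1]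
            _ = x ^ n * (y ^ n * x) * (⁅y, x⁆ ^ n.choose 2 * y) := by group
            _ = x ^ n * (y ^ n * x) * (y * ⁅y, x⁆ ^ n.choose 2) := by rw [h2]
            _ = x ^ n * (y ^ n * x) * y * ⁅y, x⁆ ^ n.choose 2 := by group
      _ = x ^ n * (x * y ^ n * ⁅y, x⁆ ^ n) * y * ⁅y, x⁆ ^ n.choose 2 := by rw [hyx]
      _ = x ^ (n+1) * y ^ (n+1) * ⁅y, x⁆ ^ ((n+1).choose 2) := by
          have h2 := ((hc y).pow_left n).eq
          have h3 : (n+1).choose 2 = n.choose 2 + n := by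
            rw [Nat.choose_succ_succ]
            simp [Nat.add_comm, Nat.choose_one_right]
          rw [h3, pow_add ⁅y, x⁆, pow_succ x, pow_succ y]
          calc x ^ n * (x * y ^ n * ⁅y, x⁆ ^ n) * y * ⁅y, x⁆ ^ n.choose 2
              = x ^ n * x * y ^ n * (⁅y, x⁆ ^ n * y) * ⁅y, x⁆ ^ n.choose 2 := by group
            _ = x ^ n * x * y ^ n * (y * ⁅y, x⁆ ^ n) * ⁅y, x⁆ ^ n.choose 2 := by rw [h2]
            _ = x ^ n * x * (y ^ n * y) * (⁅y, x⁆ ^ n.choose 2 * ⁅y, x⁆ ^ n) := by group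

/-- Let `G` be a finite UCS `p`-group of odd exponent `p²`, with the
`p`-th power bijection `f : G/Φ(G) → Φ(G)` and the algebra product `m` on
`G/Φ(G)` given by `f (m x̄ ȳ) = [x,y]`. Then a subgroup `H` with
`Φ(G) ≤ H ≤ G` is powerful (`H' ≤ H^p`) iff `H/Φ(G)` is a subalgebra of `L(G)`;
moreover `H ↦ H/Φ(G)` is a bijection between powerful subgroups of `G` containing
`Φ(G)` and subalgebras of `L(G)`. -/
theorem stmt12 {p : ℕ} [Fact p.Prime] (hodd : Odd p)
    {G : Type*} [Group G] [Finite G] (hp : IsPGroup p G)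
    (hexp : Monoid.exponent G = p ^ 2)
    (hucs : ∀ H : Subgroup G, H.Characteristic → H = ⊥ ∨ H = frattini G ∨ H = ⊤)
    (f : G ⧸ frattini G → frattini G)
    (hf : ∀ x : G, (f ((x : G ⧸ frattini G)) : G) = x ^ p)
    (hbij : Function.Bijective f)
    (m : G ⧸ frattini G → G ⧸ frattini G → G ⧸ frattini G)
    (hm : ∀ x y : G, (f (m x y) : G) = ⁅x, y⁆) :
    (∀ H : Subgroup G, frattini G ≤ H →
      (⁅H, H⁆ ≤ Subgroup.closure {x : G | ∃ h ∈ H, x = h ^ p} ↔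
        ∀ a ∈ H.map (QuotientGroup.mk' (frattini G)),
          ∀ b ∈ H.map (QuotientGroup.mk' (frattini G)),
            m a b ∈ H.map (QuotientGroup.mk' (frattini G)))) ∧
    -- the correspondence `H ↦ H/Φ(G)` is injective ...
    (∀ H₁ H₂ : Subgroup G, frattini G ≤ H₁ → frattini G ≤ H₂ →
      H₁.map (QuotientGroup.mk' (frattini G)) = H₂.map (QuotientGroup.mk' (frattini G)) →
      H₁ = H₂) ∧
    -- ... and maps the powerful subgroups containing `Φ(G)` onto the subalgebras
    (∀ S : Subgroup (G ⧸ frattini G), (∀ a ∈ S, ∀ b ∈ S, m a b ∈ S) →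
      ∃ H : Subgroup G, frattini G ≤ H ∧
        ⁅H, H⁆ ≤ Subgroup.closure {x : G | ∃ h ∈ H, x = h ^ p} ∧
        H.map (QuotientGroup.mk' (frattini G)) = S) := by
  have hp1 : 1 < p := (Fact.out : p.Prime).one_lt
  -- G is nontrivial
  have hnt : Nontrivial G := by
    rcases subsingleton_or_nontrivial G with h|h
    · exfalso
      have h1 : Monoid.exponent G = 1 := Monoid.exp_eq_one_iff.mpr h
      rw [hexp] at h1
      have : 1 < p ^ 2 := Nat.one_lt_pow (by norm_num) hp1
      omega
    · exact h
  -- the Frattini subgroup is central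
  have hZ : frattini G ≤ Subgroup.center G := by
    rcases hucs (Subgroup.center G) inferInstance with h|h|h
    · exact absurd h (IsPGroup.bot_lt_center hp).ne'
    · exact h ▸ le_rfl
    · exact h ▸ le_top
  -- elements of the Frattini subgroup have order dividing p
  have hpexp : ∀ z : G, z ∈ frattini G → z ^ p = 1 := by
    intro z hz
    obtain ⟨c, hc⟩ := hbij.2 ⟨z, hz⟩
    obtain ⟨x, rfl⟩ := QuotientGroup.mk'_surjective (frattini G) c
    have e1 : z = x ^ p := by
      have h2 := congrArg (Subtype.val) hc
      rw [QuotientGroup.mk'_apply, hf x] at h2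
      exact h2.symm
    have e2 : x ^ (p ^ 2) = 1 := hexp ▸ Monoid.pow_exponent_eq_one x
    rw [e1, ← pow_mul, ← pow_two, e2]
  -- all commutators lie in the Frattini subgroup, hence are central
  have hcin : ∀ x y : G, ⁅x, y⁆ ∈ frattini G := fun x y => by
    rw [← hm x y]; exact (f (m x y)).2
  have hcc : ∀ x y z : G, Commute ⁅y, x⁆ z := fun x y z =>
    ((Subgroup.mem_center_iff.mp (hZ (hcin y x))) z).symm
  -- the p-th power map is multiplicative
  have hph : ∀ x y : G, (x * y) ^ p = x ^ p * y ^ p := by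
    intro x y
    obtain ⟨k, hk⟩ := hodd
    have hch : p.choose 2 = p * k := by
      rw [Nat.choose_two_right, hk]
      have h2 : 2 * k + 1 - 1 = 2 * k := by omega
      rw [h2, Nat.mul_div_assoc _ ⟨k, rfl⟩, Nat.mul_div_cancel_left k (by norm_num : 0 < 2)]
    have hc1 : ⁅y, x⁆ ^ p.choose 2 = 1 := by
      rw [hch, pow_mul, hpexp _ (hcin y x), one_pow]
    rw [stmt12_aux_pow x y (hcc x y) p, hc1, mul_one]
  -- the set of p-th powers of elements of H is already a subgroup
  have hPsub : ∀ H : Subgroup G,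
      ∀ z ∈ Subgroup.closure {x : G | ∃ h ∈ H, x = h ^ p}, ∃ h ∈ H, z = h ^ p := by
    intro H
    have hle : Subgroup.closure {x : G | ∃ h ∈ H, x = h ^ p} ≤
        ({ carrier := {x : G | ∃ h ∈ H, x = h ^ p},
           one_mem' := ⟨1, H.one_mem, (one_pow p).symm⟩,
           mul_mem' := by
             rintro a b ⟨h₁, hh₁, rfl⟩ ⟨h₂, hh₂, rfl⟩
             exact ⟨h₁ * h₂, H.mul_mem hh₁ hh₂, (hph h₁ h₂).symm⟩
           inv_mem' := by
             rintro a ⟨h, hh, rfl⟩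
             exact ⟨h⁻¹, H.inv_mem hh, (inv_pow h p).symm⟩ } : Subgroup G) :=
      Subgroup.closure_le _ |>.mpr (le_refl _)
    intro z hz
    exact hle hz
  -- part 1: the powerful/subalgebra equivalence
  have part1 : ∀ H : Subgroup G, frattini G ≤ H →
      (⁅H, H⁆ ≤ Subgroup.closure {x : G | ∃ h ∈ H, x = h ^ p} ↔
        ∀ a ∈ H.map (QuotientGroup.mk' (frattini G)),
          ∀ b ∈ H.map (QuotientGroup.mk' (frattini G)),
            m a b ∈ H.map (QuotientGroup.mk' (frattini G))) := by
    intro H _hle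
    constructor
    · intro hpow a ha b hb
      obtain ⟨x, hx, rfl⟩ := Subgroup.mem_map.mp ha
      obtain ⟨y, hy, rfl⟩ := Subgroup.mem_map.mp hb
      have hcmem : ⁅x, y⁆ ∈ Subgroup.closure {x : G | ∃ h ∈ H, x = h ^ p} :=
        hpow (Subgroup.commutator_mem_commutator hx hy)
      obtain ⟨h, hh, hhp⟩ := hPsub H _ hcmem
      refine Subgroup.mem_map.mpr ⟨h, hh, ?_⟩
      apply hbij.1
      apply Subtype.ext
      show ((f (QuotientGroup.mk' (frattini G) h)) : G)
        = ((f (m (QuotientGroup.mk' (frattini G) x) (QuotientGroup.mk' (frattini G) y))) : G)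
      rw [QuotientGroup.mk'_apply, QuotientGroup.mk'_apply, QuotientGroup.mk'_apply,
        hf h, hm x y, hhp]
    · intro hclosed
      rw [Subgroup.commutator_le]
      intro x hx y hy
      have ha : QuotientGroup.mk' (frattini G) x ∈ H.map (QuotientGroup.mk' (frattini G)) :=
        Subgroup.mem_map_of_mem _ hx
      have hb : QuotientGroup.mk' (frattini G) y ∈ H.map (QuotientGroup.mk' (frattini G)) :=
        Subgroup.mem_map_of_mem _ hy
      obtain ⟨h, hh, hhq⟩ := Subgroup.mem_map.mp (hclosed _ ha _ hb)
      apply Subgroup.subset_closure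
      refine ⟨h, hh, ?_⟩
      have : ((f (m (QuotientGroup.mk' (frattini G) x) (QuotientGroup.mk' (frattini G) y))) : G)
          = ⁅x, y⁆ := by
        rw [QuotientGroup.mk'_apply, QuotientGroup.mk'_apply]
        exact hm x y
      rw [← this, ← hhq, QuotientGroup.mk'_apply, hf h]
  refine ⟨part1, ?_, ?_⟩
  · -- injectivity
    intro H₁ H₂ h1 h2 heq
    have := congrArg (Subgroup.comap (QuotientGroup.mk' (frattini G))) heq
    rwa [Subgroup.comap_map_eq, Subgroup.comap_map_eq, QuotientGroup.ker_mk',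
      sup_eq_left.mpr h1, sup_eq_left.mpr h2] at this
  · -- surjectivity onto subalgebras
    intro S hS
    have hle : frattini G ≤ S.comap (QuotientGroup.mk' (frattini G)) := by
      intro z hz
      have : QuotientGroup.mk' (frattini G) z = 1 := by
        rw [QuotientGroup.mk'_apply]
        exact (QuotientGroup.eq_one_iff z).mpr hz
      show QuotientGroup.mk' (frattini G) z ∈ S
      rw [this]
      exact S.one_mem
    have heq : (S.comap (QuotientGroup.mk' (frattini G))).map (QuotientGroup.mk' (frattini G)) = S :=
      Subgroup.map_comap_eq_self_of_surjective (QuotientGroup.mk'_surjective _) S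
    refine ⟨S.comap (QuotientGroup.mk' (frattini G)), hle, ?_, heq⟩
    apply (part1 _ hle).mpr
    rw [heq]
    exact hS
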